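/- For k ≥ 2, let H be a k-uniform hypergraph on n vertices with m edges satisfying τ(H) = (n + ⌊k/2⌋·m)/⌊3k/2⌋. Then H has no isolated vertex, i.e., every vertex of H lies in at least one edge. -/

import Mathlib

/-- A hypergraph: a finite vertex set together with a finite (indexed, hence
multiset-like) family of edges, each edge a subset of the vertex set. -/
structure FinHypergraph (V : Type*) where
  verts : Finset V
  numEdges : ℕ
  edge : Fin numEdges → Finset V
  edge_sub : ∀ i, edge i ⊆ verts

namespace FinHypergraph

variable {V : Type*} [DecidableEq V]

/-- `H` is `k`-uniform if every edge has exactly `k` vertices. -/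
def Uniform (H : FinHypergraph V) (k : ℕ) : Prop :=
  ∀ i, (H.edge i).card = k

/-- A transversal: a set of vertices meeting every edge. -/
def IsTransversal (H : FinHypergraph V) (T : Finset V) : Prop :=
  T ⊆ H.verts ∧ ∀ i, (T ∩ H.edge i).Nonempty

/-- The transversal number `τ(H)`: minimum size of a transversal. -/
noncomputable def tau (H : FinHypergraph V) : ℕ :=
  sInf {n | ∃ T : Finset V, H.IsTransversal T ∧ T.card = n}

/-- The degree of a vertex: the number of edges containing it. -/
def degree (H : FinHypergraph V) (v : V) : ℕ :=
  (Finset.univ.filter fun i => v ∈ H.edge i).card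

/-- Two vertices are adjacent if some edge contains both. -/
def Adj (H : FinHypergraph V) (u v : V) : Prop :=
  u ≠ v ∧ ∃ i, u ∈ H.edge i ∧ v ∈ H.edge i

/-- `H` is connected if every pair of vertices is joined by a sequence of
consecutively adjacent vertices. -/
def Connected (H : FinHypergraph V) : Prop :=
  ∀ u ∈ H.verts, ∀ v ∈ H.verts, Relation.ReflTransGen H.Adj u v

/-- `H` is (a copy of) `E_k`: `k` vertices and exactly one edge. -/
def IsEk (H : FinHypergraph V) (k : ℕ) : Prop :=
  H.verts.card = k ∧ H.numEdges = 1 ∧ ∀ i, H.edge i = H.verts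

/-- `H` is (a copy of) the generalized triangle `T_k`: the vertex set is the
disjoint union of sets `A`, `B`, `C`, `D` with `|A| = ⌈k/2⌉`,
`|B| = |C| = ⌊k/2⌋`, `|D| = ⌈k/2⌉ - ⌊k/2⌋`, and the edges are exactly
`A ∪ B`, `A ∪ C` and `B ∪ C ∪ D`. -/
def IsTk (H : FinHypergraph V) (k : ℕ) : Prop :=
  ∃ A B C D : Finset V,
    A.card = (k + 1) / 2 ∧ B.card = k / 2 ∧ C.card = k / 2 ∧
    D.card = (k + 1) / 2 - k / 2 ∧
    Disjoint A B ∧ Disjoint A C ∧ Disjoint A D ∧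
    Disjoint B C ∧ Disjoint B D ∧ Disjoint C D ∧
    H.verts = A ∪ B ∪ C ∪ D ∧
    H.numEdges = 3 ∧
    (List.ofFn H.edge : Multiset (Finset V)) = {A ∪ B, A ∪ C, B ∪ C ∪ D}

end FinHypergraph

namespace CMaux

open Multiset

lemma countP_split {γ : Type*} (G : Multiset γ) (p q : γ → Prop) [DecidablePred p]
    [DecidablePred q] :
    G.countP p = G.countP (fun f => p f ∧ q f) + G.countP (fun f => p f ∧ ¬ q f) := by
  induction G using Multiset.induction_on with
  | empty => simp
  | cons a s ih =>
    simp only [Multiset.countP_cons]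
    by_cases hp : p a <;> by_cases hq : q a <;> simp [hp, hq] <;> omega

lemma countP_or {γ : Type*} (G : Multiset γ) (p q : γ → Prop) [DecidablePred p]
    [DecidablePred q] (h : ∀ f ∈ G, ¬ (p f ∧ q f)) :
    G.countP (fun f => p f ∨ q f) = G.countP p + G.countP q := by
  rw [countP_split G (fun f => p f ∨ q f) p]
  congr 1
  · exact Multiset.countP_congr rfl (fun x hx => propext ⟨fun h' => h'.2, fun h' => ⟨Or.inl h', h'⟩⟩)
  · refine Multiset.countP_congr rfl (fun x hx => propext ⟨fun h' => ?_, fun h' => ⟨Or.inr h', fun hp => h x hx ⟨hp, h'⟩⟩⟩)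
    rcases h'.1 with h1 | h1
    · exact absurd h1 h'.2
    · exact h1

lemma countP_le_countP {γ : Type*} (G : Multiset γ) (p q : γ → Prop) [DecidablePred p]
    [DecidablePred q] (h : ∀ a ∈ G, p a → q a) : G.countP p ≤ G.countP q := by
  induction G using Multiset.induction_on with
  | empty => simp
  | cons a G ih =>
    simp only [Multiset.countP_cons]
    have h1 : G.countP p ≤ G.countP q := ih (fun a ha => h a (Multiset.mem_cons_of_mem ha))
    have h2 := h a (Multiset.mem_cons_self a G)
    by_cases hp : p a
    · rw [if_pos hp, if_pos (h2 hp)]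
      omega
    · rw [if_neg hp]
      split <;> omega

lemma sum_map_ite {γ : Type*} (G : Multiset γ) (p : γ → Prop) [DecidablePred p] (c : ℕ) :
    (G.map (fun f => if p f then c else 0)).sum = c * G.countP p := by
  induction G using Multiset.induction_on with
  | empty => simp
  | cons a G ih =>
    simp only [Multiset.map_cons, Multiset.sum_cons, Multiset.countP_cons, ih]
    by_cases hp : p a <;> simp [hp] <;> ring

lemma sum_countP {β γ : Type*} (s : Finset β) (G : Multiset γ) (q : β → γ → Prop)
    [∀ e, DecidablePred (q e)] [DecidableEq β] :
    (∑ e ∈ s, G.countP (q e)) = (G.map (fun f => (s.filter (fun e => q e f)).card)).sum := by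
  induction G using Multiset.induction_on with
  | empty => simp
  | cons a G ih =>
    simp only [Multiset.countP_cons, Multiset.map_cons, Multiset.sum_cons, Finset.sum_add_distrib,
      ih]
    rw [add_comm]
    congr 1
    rw [Finset.card_filter]

variable {α : Type*} [DecidableEq α]

def HasTri (G : Multiset (Finset α)) (k : ℕ) : Prop :=
  ∃ u v p : α, u ≠ v ∧ u ≠ p ∧ v ≠ p ∧ ({u, v} : Finset α) ∈ G ∧ ({u, p} : Finset α) ∈ G ∧
    ({v, p} : Finset α) ∈ G ∧ k ≤ G.countP (· ⊆ ({u, v, p} : Finset α))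

set_option maxHeartbeats 1000000 in
lemma per_edge (k : ℕ) (G : Multiset (Finset α)) (M : Finset (Finset α))
    (h2 : ∀ f ∈ G, Finset.card f = 2)
    (hdeg : ∀ x : α, G.countP (x ∈ ·) ≤ k)
    (hnt : ¬ HasTri G k)
    (hMG : ∀ f ∈ M, f ∈ G)
    (hMdisj : ∀ f ∈ M, ∀ g ∈ M, f ≠ g → Disjoint f g)
    (hmax : ∀ M' : Finset (Finset α), (∀ f ∈ M', f ∈ G) →
      (∀ f ∈ M', ∀ g ∈ M', f ≠ g → Disjoint f g) → M'.card ≤ M.card)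
    {u v : α} (huv : u ≠ v) (heM : ({u, v} : Finset α) ∈ M) :
    2 * G.countP (fun f => ¬ Disjoint ({u, v} : Finset α) f ∧
        (M.filter (fun e' => ¬ Disjoint e' f)).card = 1)
      + G.countP (fun f => ¬ Disjoint ({u, v} : Finset α) f ∧
        ¬ (M.filter (fun e' => ¬ Disjoint e' f)).card = 1)
      ≤ 2 * (3 * k / 2) := by
  classical
  set VM : Finset α := M.biUnion id with hVMdef
  have hmemVM : ∀ a : α, a ∈ VM ↔ ∃ e ∈ M, a ∈ e := by
    intro a; simp [hVMdef]
  have heG : ({u, v} : Finset α) ∈ G := hMG _ heM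
  have huVM : u ∈ VM := (hmemVM u).2 ⟨_, heM, by simp⟩
  have hvVM : v ∈ VM := (hmemVM v).2 ⟨_, heM, by simp⟩
  -- an element lies in at most one matching edge
  have hsingle : ∀ a : α, ∀ e ∈ M, ∀ e' ∈ M, a ∈ e → a ∈ e' → e = e' := by
    intro a e he e' he' ha ha'
    by_contra hne
    exact Finset.disjoint_left.1 (hMdisj e he e' he' hne) ha ha'
  -- predicates
  set pM : Finset α → Prop := fun f => u ∈ f ∧ v ∈ f with hpM
  set pXu : Finset α → Prop := fun f => (u ∈ f ∧ v ∉ f) ∧ ¬ ∃ w ∈ f, w ≠ u ∧ w ∈ VM with hpXu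
  set pZu : Finset α → Prop := fun f => (u ∈ f ∧ v ∉ f) ∧ (∃ w ∈ f, w ≠ u ∧ w ∈ VM) with hpZu
  set pXv : Finset α → Prop := fun f => (v ∈ f ∧ u ∉ f) ∧ ¬ ∃ w ∈ f, w ≠ v ∧ w ∈ VM with hpXv
  set pZv : Finset α → Prop := fun f => (v ∈ f ∧ u ∉ f) ∧ (∃ w ∈ f, w ≠ v ∧ w ∈ VM) with hpZv
  -- pointwise characterization of the "private" edges
  have hptA : ∀ f ∈ G, ((¬ Disjoint ({u, v} : Finset α) f ∧
      (M.filter (fun e' => ¬ Disjoint e' f)).card = 1) ↔ (pM f ∨ pXu f ∨ pXv f)) := by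
    intro f hf
    have hf2 : f.card = 2 := h2 f hf
    constructor
    · rintro ⟨hnd, hc1⟩
      -- any matching edge meeting f equals {u,v}
      have honly : ∀ e' ∈ M, ¬ Disjoint e' f → e' = ({u, v} : Finset α) := by
        obtain ⟨a, hae⟩ := Finset.card_eq_one.1 hc1
        have hea : ({u, v} : Finset α) = a := by
          have : ({u, v} : Finset α) ∈ M.filter (fun e' => ¬ Disjoint e' f) :=
            Finset.mem_filter.2 ⟨heM, hnd⟩
          rw [hae] at this; exact Finset.mem_singleton.1 this
        intro e' he' hd'
        have : e' ∈ M.filter (fun e' => ¬ Disjoint e' f) := Finset.mem_filter.2 ⟨he', hd'⟩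
        rw [hae] at this
        rw [Finset.mem_singleton.1 this, hea]
      obtain ⟨a, hauv, haf⟩ := Finset.not_disjoint_iff.1 hnd
      have hno : ∀ w ∈ f, w ≠ u → w ≠ v → w ∉ VM := by
        intro w hwf hwu hwv hwVM
        obtain ⟨e'', he'', hwe⟩ := (hmemVM w).1 hwVM
        have := honly e'' he'' (Finset.not_disjoint_iff.2 ⟨w, hwe, hwf⟩)
        rw [this] at hwe
        rcases Finset.mem_insert.1 hwe with h | h
        · exact hwu h
        · exact hwv (Finset.mem_singleton.1 h)
      by_cases hu : u ∈ f <;> by_cases hv : v ∈ f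
      · exact Or.inl ⟨hu, hv⟩
      · refine Or.inr (Or.inl ⟨⟨hu, hv⟩, ?_⟩)
        rintro ⟨w, hwf, hwu, hwVM⟩
        have hwv : w ≠ v := fun h => hv (h ▸ hwf)
        exact hno w hwf hwu hwv hwVM
      · refine Or.inr (Or.inr ⟨⟨hv, hu⟩, ?_⟩)
        rintro ⟨w, hwf, hwv, hwVM⟩
        have hwu : w ≠ u := fun h => hu (h ▸ hwf)
        exact hno w hwf hwu hwv hwVM
      · rcases Finset.mem_insert.1 hauv with h | h
        · exact absurd (h ▸ haf) hu
        · exact absurd ((Finset.mem_singleton.1 h) ▸ haf) hv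
    · -- backward
      intro hcase
      have key : ∀ e' ∈ M, ¬ Disjoint e' f → e' = ({u, v} : Finset α) := by
        intro e' he' hd'
        obtain ⟨a, hae', haf⟩ := Finset.not_disjoint_iff.1 hd'
        rcases hcase with ⟨hu, hv⟩ | ⟨⟨hu, hv⟩, hne⟩ | ⟨⟨hv, hu⟩, hne⟩
        · -- f = {u,v}
          have hfe : ({u, v} : Finset α) = f := by
            apply Finset.eq_of_subset_of_card_le
            · intro b hb
              rcases Finset.mem_insert.1 hb with rfl | hb
              · exact hu
              · exact (Finset.mem_singleton.1 hb) ▸ hv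
            · rw [hf2, Finset.card_insert_of_notMem (by simp [huv]), Finset.card_singleton]
          rw [← hfe] at haf
          rcases Finset.mem_insert.1 haf with rfl | haf
          · exact hsingle a e' he' _ heM hae' (by simp)
          · have hav := Finset.mem_singleton.1 haf
            subst hav
            exact hsingle a e' he' _ heM hae' (by simp)
        · by_cases hau : a = u
          · subst hau
            exact hsingle a e' he' _ heM hae' (by simp)
          · exact absurd ⟨a, haf, hau, (hmemVM a).2 ⟨e', he', hae'⟩⟩ hne
        · by_cases hav : a = v
          · subst hav
            exact hsingle a e' he' _ heM hae' (by simp)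
          · exact absurd ⟨a, haf, hav, (hmemVM a).2 ⟨e', he', hae'⟩⟩ hne
      have hnd : ¬ Disjoint ({u, v} : Finset α) f := by
        rcases hcase with ⟨hu, _⟩ | ⟨⟨hu, _⟩, _⟩ | ⟨⟨hv, _⟩, _⟩
        · exact Finset.not_disjoint_iff.2 ⟨u, by simp, hu⟩
        · exact Finset.not_disjoint_iff.2 ⟨u, by simp, hu⟩
        · exact Finset.not_disjoint_iff.2 ⟨v, by simp, hv⟩
      refine ⟨hnd, ?_⟩
      have : M.filter (fun e' => ¬ Disjoint e' f) = {({u, v} : Finset α)} := by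
        apply Finset.ext
        intro e'
        simp only [Finset.mem_filter, Finset.mem_singleton]
        constructor
        · rintro ⟨he', hd'⟩; exact key e' he' hd'
        · rintro rfl; exact ⟨heM, hnd⟩
      rw [this, Finset.card_singleton]
  have hptB : ∀ f ∈ G, ((¬ Disjoint ({u, v} : Finset α) f ∧
      ¬ (M.filter (fun e' => ¬ Disjoint e' f)).card = 1) ↔ (pZu f ∨ pZv f)) := by
    intro f hf
    constructor
    · rintro ⟨hnd, hc⟩
      by_cases hu : u ∈ f <;> by_cases hv : v ∈ f
      · exact absurd ((hptA f hf).2 (Or.inl ⟨hu, hv⟩)).2 hc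
      · -- pZu
        have hnx : ¬ pXu f := fun hx => hc ((hptA f hf).2 (Or.inr (Or.inl hx))).2
        have hE : ∃ w ∈ f, w ≠ u ∧ w ∈ VM := by
          by_contra hE
          exact hnx ⟨⟨hu, hv⟩, hE⟩
        exact Or.inl ⟨⟨hu, hv⟩, hE⟩
      · have hnx : ¬ pXv f := fun hx => hc ((hptA f hf).2 (Or.inr (Or.inr hx))).2
        have hE : ∃ w ∈ f, w ≠ v ∧ w ∈ VM := by
          by_contra hE
          exact hnx ⟨⟨hv, hu⟩, hE⟩
        exact Or.inr ⟨⟨hv, hu⟩, hE⟩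
      · obtain ⟨a, hauv, haf⟩ := Finset.not_disjoint_iff.1 hnd
        rcases Finset.mem_insert.1 hauv with rfl | h
        · exact absurd haf hu
        · exact absurd ((Finset.mem_singleton.1 h) ▸ haf) hv
    · intro hcase
      have hnd : ¬ Disjoint ({u, v} : Finset α) f := by
        rcases hcase with ⟨⟨hu, _⟩, _⟩ | ⟨⟨hv, _⟩, _⟩
        · exact Finset.not_disjoint_iff.2 ⟨u, by simp, hu⟩
        · exact Finset.not_disjoint_iff.2 ⟨v, by simp, hv⟩
      refine ⟨hnd, ?_⟩
      have h2lt : 1 < (M.filter (fun e' => ¬ Disjoint e' f)).card := by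
        rcases hcase with ⟨⟨hu, hv⟩, w, hwf, hwu, hwVM⟩ | ⟨⟨hv, hu⟩, w, hwf, hwv, hwVM⟩
        · obtain ⟨e'', he'', hwe⟩ := (hmemVM w).1 hwVM
          have hne : e'' ≠ ({u, v} : Finset α) := by
            rintro rfl
            rcases Finset.mem_insert.1 hwe with h | h
            · exact hwu h
            · exact hv ((Finset.mem_singleton.1 h) ▸ hwf)
          refine Finset.one_lt_card.2 ⟨e'', ?_, ({u, v} : Finset α), ?_, hne⟩
          · exact Finset.mem_filter.2 ⟨he'', Finset.not_disjoint_iff.2 ⟨w, hwe, hwf⟩⟩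
          · exact Finset.mem_filter.2 ⟨heM, hnd⟩
        · obtain ⟨e'', he'', hwe⟩ := (hmemVM w).1 hwVM
          have hne : e'' ≠ ({u, v} : Finset α) := by
            rintro rfl
            rcases Finset.mem_insert.1 hwe with h | h
            · exact hu (h ▸ hwf)
            · exact hwv (Finset.mem_singleton.1 h)
          refine Finset.one_lt_card.2 ⟨e'', ?_, ({u, v} : Finset α), ?_, hne⟩
          · exact Finset.mem_filter.2 ⟨he'', Finset.not_disjoint_iff.2 ⟨w, hwe, hwf⟩⟩
          · exact Finset.mem_filter.2 ⟨heM, hnd⟩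
      omega
  -- exclusivity facts
  have hexM_Xu : ∀ f ∈ G, ¬ (pM f ∧ pXu f) := by
    rintro f hf ⟨⟨_, hv⟩, ⟨⟨_, hv'⟩, _⟩⟩; exact hv' hv
  have hexM_Xv : ∀ f ∈ G, ¬ (pM f ∧ pXv f) := by
    rintro f hf ⟨⟨hu, _⟩, ⟨⟨_, hu'⟩, _⟩⟩; exact hu' hu
  have hexXu_Xv : ∀ f ∈ G, ¬ (pXu f ∧ pXv f) := by
    rintro f hf ⟨⟨⟨hu, _⟩, _⟩, ⟨⟨_, hu'⟩, _⟩⟩; exact hu' hu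
  have hexZu_Zv : ∀ f ∈ G, ¬ (pZu f ∧ pZv f) := by
    rintro f hf ⟨⟨⟨hu, _⟩, _⟩, ⟨⟨_, hu'⟩, _⟩⟩; exact hu' hu
  -- count identities
  have hOr : G.countP (fun f => pM f ∨ pXu f ∨ pXv f)
      = G.countP pM + G.countP pXu + G.countP pXv := by
    rw [countP_or G pM (fun f => pXu f ∨ pXv f) (by
      rintro f hf ⟨hm, hx | hx⟩
      · exact hexM_Xu f hf ⟨hm, hx⟩
      · exact hexM_Xv f hf ⟨hm, hx⟩),
      countP_or G pXu pXv hexXu_Xv, add_assoc]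
  have hA : G.countP (fun f => ¬ Disjoint ({u, v} : Finset α) f ∧
      (M.filter (fun e' => ¬ Disjoint e' f)).card = 1)
      = G.countP pM + G.countP pXu + G.countP pXv := by
    rw [← hOr]
    exact Multiset.countP_congr rfl (fun f hf => propext (hptA f hf))
  have hB : G.countP (fun f => ¬ Disjoint ({u, v} : Finset α) f ∧
      ¬ (M.filter (fun e' => ¬ Disjoint e' f)).card = 1)
      = G.countP pZu + G.countP pZv := by
    rw [← countP_or G pZu pZv hexZu_Zv]
    exact Multiset.countP_congr rfl (fun f hf => propext (hptB f hf))
  have hexZu_Xu : ∀ f ∈ G, ¬ (pZu f ∧ pXu f) := by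
    rintro f hf ⟨⟨_, hE⟩, ⟨_, hnE⟩⟩; exact hnE hE
  have hexZv_Xv : ∀ f ∈ G, ¬ (pZv f ∧ pXv f) := by
    rintro f hf ⟨⟨_, hE⟩, ⟨_, hnE⟩⟩; exact hnE hE
  have hexM_Zu : ∀ f ∈ G, ¬ (pM f ∧ pZu f) := by
    rintro f hf ⟨⟨_, hv⟩, ⟨⟨_, hv'⟩, _⟩⟩; exact hv' hv
  have hexM_Zv : ∀ f ∈ G, ¬ (pM f ∧ pZv f) := by
    rintro f hf ⟨⟨hu, _⟩, ⟨⟨_, hu'⟩, _⟩⟩; exact hu' hu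
  have hdu : G.countP (fun f => u ∈ f) = G.countP pM + G.countP pZu + G.countP pXu := by
    have h1 : G.countP (fun f => u ∈ f) = G.countP (fun f => pM f ∨ (pZu f ∨ pXu f)) := by
      refine Multiset.countP_congr rfl (fun f hf => propext ?_)
      constructor
      · intro hu
        by_cases hv : v ∈ f
        · exact Or.inl ⟨hu, hv⟩
        · by_cases hE : ∃ w ∈ f, w ≠ u ∧ w ∈ VM
          · exact Or.inr (Or.inl ⟨⟨hu, hv⟩, hE⟩)
          · exact Or.inr (Or.inr ⟨⟨hu, hv⟩, hE⟩)
      · rintro (⟨hu, _⟩ | ⟨⟨hu, _⟩, _⟩ | ⟨⟨hu, _⟩, _⟩) <;> exact hu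
    rw [h1, countP_or G pM (fun f => pZu f ∨ pXu f) (by
        rintro f hf ⟨hm, hx | hx⟩
        · exact hexM_Zu f hf ⟨hm, hx⟩
        · exact hexM_Xu f hf ⟨hm, hx⟩),
      countP_or G pZu pXu hexZu_Xu, add_assoc]
  have hdv : G.countP (fun f => v ∈ f) = G.countP pM + G.countP pZv + G.countP pXv := by
    have h1 : G.countP (fun f => v ∈ f) = G.countP (fun f => pM f ∨ (pZv f ∨ pXv f)) := by
      refine Multiset.countP_congr rfl (fun f hf => propext ?_)
      constructor
      · intro hv
        by_cases hu : u ∈ f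
        · exact Or.inl ⟨hu, hv⟩
        · by_cases hE : ∃ w ∈ f, w ≠ v ∧ w ∈ VM
          · exact Or.inr (Or.inl ⟨⟨hv, hu⟩, hE⟩)
          · exact Or.inr (Or.inr ⟨⟨hv, hu⟩, hE⟩)
      · rintro (⟨_, hv⟩ | ⟨⟨hv, _⟩, _⟩ | ⟨⟨hv, _⟩, _⟩) <;> exact hv
    rw [h1, countP_or G pM (fun f => pZv f ∨ pXv f) (by
        rintro f hf ⟨hm, hx | hx⟩
        · exact hexM_Zv f hf ⟨hm, hx⟩
        · exact hexM_Xv f hf ⟨hm, hx⟩),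
      countP_or G pZv pXv hexZv_Xv, add_assoc]
  have hmu : 1 ≤ G.countP pM :=
    Multiset.countP_pos.2 ⟨{u, v}, heG, by simp [hpM]⟩
  rw [hA, hB]
  by_cases hxu0 : G.countP pXu = 0
  · have h1 := hdeg u
    have h2' := hdeg v
    omega
  by_cases hxv0 : G.countP pXv = 0
  · have h1 := hdeg u
    have h2' := hdeg v
    omega
  -- both positive : we find a triangle through an unmatched vertex
  obtain ⟨f₁, hf₁G, hf₁⟩ := Multiset.countP_pos.1 (Nat.pos_of_ne_zero hxu0)
  obtain ⟨f₂, hf₂G, hf₂⟩ := Multiset.countP_pos.1 (Nat.pos_of_ne_zero hxv0)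
  have hshape : ∀ (x : α), ∀ f ∈ G, x ∈ f → ∃ q, q ≠ x ∧ f = {x, q} := by
    intro x f hf hx
    obtain ⟨a, b, hab, hfab⟩ := Finset.card_eq_two.1 (h2 f hf)
    subst hfab
    rcases Finset.mem_insert.1 hx with rfl | hb
    · exact ⟨b, Ne.symm hab, rfl⟩
    · have hxb := Finset.mem_singleton.1 hb
      subst hxb
      exact ⟨a, hab, Finset.pair_comm a x⟩
  obtain ⟨q, hqu, hq⟩ := hshape u f₁ hf₁G hf₁.1.1
  have hqVM : q ∉ VM := fun hVM => hf₁.2 ⟨q, by simp [hq], hqu, hVM⟩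
  obtain ⟨q', hq'v, hq'⟩ := hshape v f₂ hf₂G hf₂.1.1
  have hq'VM : q' ∉ VM := fun hVM => hf₂.2 ⟨q', by simp [hq'], hq'v, hVM⟩
  -- the swap argument : the two pendant neighbours must coincide
  have hswap : ∀ q₁ q₂ : α, q₁ ≠ u → q₁ ∉ VM → ({u, q₁} : Finset α) ∈ G →
      q₂ ≠ v → q₂ ∉ VM → ({v, q₂} : Finset α) ∈ G → q₁ = q₂ := by
    intro q₁ q₂ hq₁u hq₁VM hg₁ hq₂v hq₂VM hg₂
    by_contra hne
    have hq₁v : q₁ ≠ v := fun h => hq₁VM (h ▸ hvVM)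
    have hq₂u : q₂ ≠ u := fun h => hq₂VM (h ▸ huVM)
    have hDg₁ : ∀ h ∈ M.erase ({u, v} : Finset α), Disjoint ({u, q₁} : Finset α) h := by
      intro h hh
      have hhM := Finset.mem_of_mem_erase hh
      have hhne := Finset.ne_of_mem_erase hh
      have hDuv : Disjoint ({u, v} : Finset α) h := hMdisj _ heM _ hhM (Ne.symm hhne)
      rw [Finset.disjoint_left]
      intro a hag hah
      rcases Finset.mem_insert.1 hag with rfl | hag
      · exact Finset.disjoint_left.1 hDuv (by simp) hah
      · have := Finset.mem_singleton.1 hag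
        subst this
        exact hq₁VM ((hmemVM a).2 ⟨h, hhM, hah⟩)
    have hDg₂ : ∀ h ∈ M.erase ({u, v} : Finset α), Disjoint ({v, q₂} : Finset α) h := by
      intro h hh
      have hhM := Finset.mem_of_mem_erase hh
      have hhne := Finset.ne_of_mem_erase hh
      have hDuv : Disjoint ({u, v} : Finset α) h := hMdisj _ heM _ hhM (Ne.symm hhne)
      rw [Finset.disjoint_left]
      intro a hag hah
      rcases Finset.mem_insert.1 hag with rfl | hag
      · exact Finset.disjoint_left.1 hDuv (by simp) hah
      · have := Finset.mem_singleton.1 hag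
        subst this
        exact hq₂VM ((hmemVM a).2 ⟨h, hhM, hah⟩)
    have hDg₁g₂ : Disjoint ({u, q₁} : Finset α) ({v, q₂} : Finset α) := by
      rw [Finset.disjoint_left]
      intro a h1 h2'
      rcases Finset.mem_insert.1 h1 with rfl | h1 <;>
        rcases Finset.mem_insert.1 h2' with h3 | h3
      · exact huv h3
      · exact hq₂u (Finset.mem_singleton.1 h3).symm
      · have := Finset.mem_singleton.1 h1
        subst this
        exact hq₁v h3
      · have h4 := Finset.mem_singleton.1 h1
        subst h4
        exact hne (Finset.mem_singleton.1 h3)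
    have hg₁notin : ({u, q₁} : Finset α) ∉ insert ({v, q₂} : Finset α)
        (M.erase ({u, v} : Finset α)) := by
      intro h
      rcases Finset.mem_insert.1 h with h | h
      · have : u ∈ ({v, q₂} : Finset α) := h ▸ (by simp)
        rcases Finset.mem_insert.1 this with h3 | h3
        · exact huv h3
        · exact hq₂u (Finset.mem_singleton.1 h3).symm
      · exact Finset.disjoint_left.1 (hDg₁ _ h) (Finset.mem_insert_self u {q₁})
          (Finset.mem_insert_self u {q₁})
    have hg₂notin : ({v, q₂} : Finset α) ∉ M.erase ({u, v} : Finset α) := by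
      intro h
      exact Finset.disjoint_left.1 (hDg₂ _ h) (Finset.mem_insert_self v {q₂})
          (Finset.mem_insert_self v {q₂})
    have hM'G : ∀ f ∈ insert ({u, q₁} : Finset α) (insert ({v, q₂} : Finset α)
        (M.erase ({u, v} : Finset α))), f ∈ G := by
      intro f hf
      rcases Finset.mem_insert.1 hf with rfl | hf
      · exact hg₁
      rcases Finset.mem_insert.1 hf with rfl | hf
      · exact hg₂
      · exact hMG _ (Finset.mem_of_mem_erase hf)
    have hM'disj : ∀ f ∈ insert ({u, q₁} : Finset α) (insert ({v, q₂} : Finset α)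
        (M.erase ({u, v} : Finset α))), ∀ g ∈ insert ({u, q₁} : Finset α)
        (insert ({v, q₂} : Finset α) (M.erase ({u, v} : Finset α))), f ≠ g → Disjoint f g := by
      intro f hf g hg hfg
      rcases Finset.mem_insert.1 hf with rfl | hf
      · rcases Finset.mem_insert.1 hg with rfl | hg
        · exact absurd rfl hfg
        rcases Finset.mem_insert.1 hg with rfl | hg
        · exact hDg₁g₂
        · exact hDg₁ _ hg
      rcases Finset.mem_insert.1 hf with rfl | hf
      · rcases Finset.mem_insert.1 hg with rfl | hg
        · exact hDg₁g₂.symm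
        rcases Finset.mem_insert.1 hg with rfl | hg
        · exact absurd rfl hfg
        · exact hDg₂ _ hg
      · rcases Finset.mem_insert.1 hg with rfl | hg
        · exact (hDg₁ _ hf).symm
        rcases Finset.mem_insert.1 hg with rfl | hg
        · exact (hDg₂ _ hf).symm
        · exact hMdisj _ (Finset.mem_of_mem_erase hf) _ (Finset.mem_of_mem_erase hg) hfg
    have hle := hmax _ hM'G hM'disj
    rw [Finset.card_insert_of_notMem hg₁notin, Finset.card_insert_of_notMem hg₂notin,
      Finset.card_erase_of_mem heM] at hle
    have hM1 : 1 ≤ M.card := Finset.card_pos.2 ⟨_, heM⟩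
    omega
  have hqq' : q = q' := hswap q q' hqu hqVM (hq ▸ hf₁G) hq'v hq'VM (hq' ▸ hf₂G)
  subst hqq'
  have hqv : q ≠ v := fun h => hqVM (h ▸ hvVM)
  have hvqG : ({v, q} : Finset α) ∈ G := hq' ▸ hf₂G
  have huqG : ({u, q} : Finset α) ∈ G := hq ▸ hf₁G
  -- all pendant edges at u (resp. v) end at q
  have hXushape : ∀ f ∈ G, pXu f → f = ({u, q} : Finset α) := by
    intro f hf hx
    obtain ⟨r, hru, hr⟩ := hshape u f hf hx.1.1
    have hrVM : r ∉ VM := fun hVM => hx.2 ⟨r, by simp [hr], hru, hVM⟩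
    have : r = q := hswap r q hru hrVM (hr ▸ hf) hq'v hq'VM hvqG
    rw [hr, this]
  have hXvshape : ∀ f ∈ G, pXv f → f = ({v, q} : Finset α) := by
    intro f hf hx
    obtain ⟨r, hrv, hr⟩ := hshape v f hf hx.1.1
    have hrVM : r ∉ VM := fun hVM => hx.2 ⟨r, by simp [hr], hrv, hVM⟩
    have : q = r := hswap q r hqu hqVM huqG hrv hrVM (hr ▸ hf)
    rw [hr, ← this]
  -- the triangle {u, v, q} is not heavy
  have hITri : G.countP (· ⊆ ({u, v, q} : Finset α))
      = G.countP pM + G.countP pXu + G.countP pXv := by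
    rw [← hOr]
    refine Multiset.countP_congr rfl (fun f hf => propext ?_)
    have hf2 : f.card = 2 := h2 f hf
    constructor
    · intro hsub
      by_cases hu : u ∈ f <;> by_cases hv : v ∈ f
      · exact Or.inl ⟨hu, hv⟩
      · -- f = {u, q}
        have hfq : f = ({u, q} : Finset α) := by
          apply Finset.eq_of_subset_of_card_le
          · intro a ha
            have := hsub ha
            rcases Finset.mem_insert.1 this with rfl | h3
            · exact Finset.mem_insert_self _ _
            rcases Finset.mem_insert.1 h3 with rfl | h3
            · exact absurd ha hv
            · exact Finset.mem_insert_of_mem h3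
          · rw [hf2, Finset.card_insert_of_notMem (by simp [Ne.symm hqu]),
              Finset.card_singleton]
        have hvnot : v ∉ ({u, q} : Finset α) := by
          simp only [Finset.mem_insert, Finset.mem_singleton]
          push_neg
          exact ⟨Ne.symm huv, Ne.symm hqv⟩
        refine Or.inr (Or.inl ⟨⟨hu, by rw [hfq]; exact hvnot⟩, ?_⟩)
        rintro ⟨w, hwf, hwu, hwVM⟩
        rw [hfq] at hwf
        rcases Finset.mem_insert.1 hwf with rfl | hwf
        · exact hwu rfl
        · have := Finset.mem_singleton.1 hwf
          subst this
          exact hqVM hwVM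
      · -- f = {v, q}
        have hfq : f = ({v, q} : Finset α) := by
          apply Finset.eq_of_subset_of_card_le
          · intro a ha
            have := hsub ha
            rcases Finset.mem_insert.1 this with rfl | h3
            · exact absurd ha hu
            · exact h3
          · rw [hf2, Finset.card_insert_of_notMem (by simp [Ne.symm hqv]),
              Finset.card_singleton]
        have hunot : u ∉ ({v, q} : Finset α) := by
          simp only [Finset.mem_insert, Finset.mem_singleton]
          push_neg
          exact ⟨huv, Ne.symm hqu⟩
        refine Or.inr (Or.inr ⟨⟨hv, by rw [hfq]; exact hunot⟩, ?_⟩)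
        rintro ⟨w, hwf, hwv, hwVM⟩
        rw [hfq] at hwf
        rcases Finset.mem_insert.1 hwf with rfl | hwf
        · exact hwv rfl
        · have := Finset.mem_singleton.1 hwf
          subst this
          exact hqVM hwVM
      · -- impossible : f ⊆ {q}
        exfalso
        have : f ⊆ ({q} : Finset α) := by
          intro a ha
          have := hsub ha
          rcases Finset.mem_insert.1 this with rfl | h3
          · exact absurd ha hu
          rcases Finset.mem_insert.1 h3 with rfl | h3
          · exact absurd ha hv
          · exact h3
        have := Finset.card_le_card this
        rw [hf2, Finset.card_singleton] at this
        omega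
    · rintro (⟨hu, hv⟩ | hx | hx)
      · -- f = {u, v}
        have hfe : ({u, v} : Finset α) = f := by
          apply Finset.eq_of_subset_of_card_le
          · intro b hb
            rcases Finset.mem_insert.1 hb with rfl | hb
            · exact hu
            · exact (Finset.mem_singleton.1 hb) ▸ hv
          · rw [hf2, Finset.card_insert_of_notMem (by simp [huv]), Finset.card_singleton]
        rw [← hfe]
        intro a ha
        rcases Finset.mem_insert.1 ha with rfl | ha
        · simp
        · simp [Finset.mem_singleton.1 ha]
      · rw [hXushape f hf hx]
        intro a ha
        rcases Finset.mem_insert.1 ha with rfl | ha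
        · simp
        · simp [Finset.mem_singleton.1 ha]
      · rw [hXvshape f hf hx]
        intro a ha
        rcases Finset.mem_insert.1 ha with rfl | ha
        · simp
        · simp [Finset.mem_singleton.1 ha]
  have hIk : ¬ (k ≤ G.countP (· ⊆ ({u, v, q} : Finset α))) := by
    intro hk
    exact hnt ⟨u, v, q, huv, Ne.symm hqu, Ne.symm hqv, heG, huqG, hvqG, hk⟩
  have h1 := hdeg u
  have h2' := hdeg v
  omega

lemma no_tri_bound (k : ℕ) (G : Multiset (Finset α))
    (h2 : ∀ f ∈ G, Finset.card f = 2) (hdeg : ∀ x : α, G.countP (x ∈ ·) ≤ k)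
    (hnt : ¬ HasTri G k) :
    ∃ M : Finset (Finset α), (∀ f ∈ M, f ∈ G) ∧
      (∀ f ∈ M, ∀ g ∈ M, f ≠ g → Disjoint f g) ∧ Multiset.card G ≤ (3 * k / 2) * M.card := by
  classical
  set 𝓜 := (G.toFinset.powerset).filter
    (fun M => ∀ f ∈ M, ∀ g ∈ M, f ≠ g → Disjoint f g) with h𝓜
  have hne : 𝓜.Nonempty := ⟨∅, by simp [h𝓜]⟩
  obtain ⟨M, hM𝓜, hmax𝓜⟩ := Finset.exists_max_image 𝓜 Finset.card hne
  rw [h𝓜, Finset.mem_filter, Finset.mem_powerset] at hM𝓜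
  obtain ⟨hMsub, hMdisj⟩ := hM𝓜
  have hMG : ∀ f ∈ M, f ∈ G := fun f hf => Multiset.mem_toFinset.1 (hMsub hf)
  have hmax : ∀ M' : Finset (Finset α), (∀ f ∈ M', f ∈ G) →
      (∀ f ∈ M', ∀ g ∈ M', f ≠ g → Disjoint f g) → M'.card ≤ M.card := by
    intro M' hM'G hM'disj
    apply hmax𝓜
    rw [h𝓜, Finset.mem_filter, Finset.mem_powerset]
    exact ⟨fun f hf => Multiset.mem_toFinset.2 (hM'G f hf), hM'disj⟩
  refine ⟨M, hMG, hMdisj, ?_⟩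
  have hmeets : ∀ f ∈ G, ∃ e ∈ M, ¬ Disjoint e f := by
    intro f hf
    by_cases hfM : f ∈ M
    · refine ⟨f, hfM, fun hD => ?_⟩
      have h0 : f = ∅ := Finset.bot_eq_empty ▸ disjoint_self.1 hD
      have := h2 f hf
      rw [h0] at this
      simp at this
    · by_contra hno
      push_neg at hno
      have hle := hmax (insert f M) ?_ ?_
      · rw [Finset.card_insert_of_notMem hfM] at hle
        omega
      · intro g hg
        rcases Finset.mem_insert.1 hg with rfl | hg
        · exact hf
        · exact hMG g hg
      · intro g hg g' hg' hne'
        rcases Finset.mem_insert.1 hg with h | hgM <;>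
          rcases Finset.mem_insert.1 hg' with h' | hg'M
        · exact absurd (h.trans h'.symm) hne'
        · rw [h]; exact (hno g' hg'M).symm
        · rw [h']; exact hno g hgM
        · exact hMdisj g hgM g' hg'M hne'
  have hcov2 : ∀ f ∈ G, (M.filter (fun e => ¬ Disjoint e f)).card ≤ 2 := by
    intro f hf
    have hsub : M.filter (fun e => ¬ Disjoint e f) ⊆
        f.biUnion (fun a => M.filter (fun e => a ∈ e)) := by
      intro e he
      rw [Finset.mem_filter] at he
      obtain ⟨a, hae, haf⟩ := Finset.not_disjoint_iff.1 he.2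
      exact Finset.mem_biUnion.2 ⟨a, haf, Finset.mem_filter.2 ⟨he.1, hae⟩⟩
    calc (M.filter (fun e => ¬ Disjoint e f)).card
        ≤ (f.biUnion (fun a => M.filter (fun e => a ∈ e))).card := Finset.card_le_card hsub
      _ ≤ ∑ a ∈ f, (M.filter (fun e => a ∈ e)).card := Finset.card_biUnion_le
      _ ≤ ∑ _a ∈ f, 1 := by
          refine Finset.sum_le_sum (fun a _ => ?_)
          refine Finset.card_le_one.2 (fun e he e' he' => ?_)
          rw [Finset.mem_filter] at he he'
          by_contra hne'
          exact Finset.disjoint_left.1 (hMdisj e he.1 e' he'.1 hne') he.2 he'.2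
      _ = f.card := by simp
      _ = 2 := h2 f hf
  -- the double counting identity
  have hswap1 : ∑ e ∈ M, G.countP (fun f => ¬ Disjoint e f ∧
      (M.filter (fun e' => ¬ Disjoint e' f)).card = 1)
      = (G.map (fun f => (M.filter (fun e => ¬ Disjoint e f ∧
        (M.filter (fun e' => ¬ Disjoint e' f)).card = 1)).card)).sum :=
    sum_countP M G _
  have hswap2 : ∑ e ∈ M, G.countP (fun f => ¬ Disjoint e f ∧
      ¬ (M.filter (fun e' => ¬ Disjoint e' f)).card = 1)
      = (G.map (fun f => (M.filter (fun e => ¬ Disjoint e f ∧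
        ¬ (M.filter (fun e' => ¬ Disjoint e' f)).card = 1)).card)).sum :=
    sum_countP M G _
  have hkey : 2 * Multiset.card G ≤ ∑ e ∈ M,
      (2 * G.countP (fun f => ¬ Disjoint e f ∧
        (M.filter (fun e' => ¬ Disjoint e' f)).card = 1)
       + G.countP (fun f => ¬ Disjoint e f ∧
        ¬ (M.filter (fun e' => ¬ Disjoint e' f)).card = 1)) := by
    rw [Finset.sum_add_distrib, ← Finset.mul_sum, hswap1, hswap2,
      ← Multiset.sum_map_mul_left, ← Multiset.sum_map_add]
    have hconst : 2 * Multiset.card G = (G.map (fun _ => 2)).sum := by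
      rw [Multiset.map_const', Multiset.sum_replicate, smul_eq_mul, mul_comm]
    rw [hconst]
    refine Multiset.sum_map_le_sum_map _ _ (fun f hf => ?_)
    by_cases hc : (M.filter (fun e' => ¬ Disjoint e' f)).card = 1
    · have : M.filter (fun e => ¬ Disjoint e f ∧
          (M.filter (fun e' => ¬ Disjoint e' f)).card = 1)
          = M.filter (fun e => ¬ Disjoint e f) := by
        refine Finset.filter_congr (fun e _ => ?_)
        simp [hc]
      rw [this, hc]
      omega
    · have h1 : M.filter (fun e => ¬ Disjoint e f ∧
          ¬ (M.filter (fun e' => ¬ Disjoint e' f)).card = 1)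
          = M.filter (fun e => ¬ Disjoint e f) := by
        refine Finset.filter_congr (fun e _ => ?_)
        simp [hc]
      rw [h1]
      obtain ⟨e, he, hd⟩ := hmeets f hf
      have : 1 ≤ (M.filter (fun e' => ¬ Disjoint e' f)).card :=
        Finset.card_pos.2 ⟨e, Finset.mem_filter.2 ⟨he, hd⟩⟩
      omega
  have hbound : ∀ e ∈ M, 2 * G.countP (fun f => ¬ Disjoint e f ∧
      (M.filter (fun e' => ¬ Disjoint e' f)).card = 1)
      + G.countP (fun f => ¬ Disjoint e f ∧
        ¬ (M.filter (fun e' => ¬ Disjoint e' f)).card = 1) ≤ 2 * (3 * k / 2) := by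
    intro e he
    obtain ⟨u, v, huv, rfl⟩ := Finset.card_eq_two.1 (h2 e (hMG e he))
    exact per_edge k G M h2 hdeg hnt hMG hMdisj hmax huv he
  have hsum := Finset.sum_le_card_nsmul M _ _ hbound
  rw [smul_eq_mul] at hsum
  have h2G : 2 * Multiset.card G ≤ 2 * ((3 * k / 2) * M.card) := by
    calc 2 * Multiset.card G ≤ _ := hkey
      _ ≤ M.card * (2 * (3 * k / 2)) := hsum
      _ = 2 * ((3 * k / 2) * M.card) := by ring
  exact Nat.le_of_mul_le_mul_left h2G (by norm_num)

lemma pairwise_disjoint_insert2 {β : Type*} [DecidableEq β] (f g : Finset β) (S : Finset (Finset β))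
    (hfg : Disjoint f g)
    (hfS : ∀ h ∈ S, Disjoint f h)
    (hgS : ∀ h ∈ S, Disjoint g h)
    (hS : ∀ x ∈ S, ∀ y ∈ S, x ≠ y → Disjoint x y) :
    ∀ x ∈ insert f (insert g S), ∀ y ∈ insert f (insert g S), x ≠ y → Disjoint x y := by
  intro x hx y hy hxy
  rcases Finset.mem_insert.1 hx with hx1 | hx2
  · rcases Finset.mem_insert.1 hy with hy1 | hy2
    · exact absurd (hx1.trans hy1.symm) hxy
    rcases Finset.mem_insert.1 hy2 with hy1 | hy3
    · rw [hx1, hy1]; exact hfg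
    · rw [hx1]; exact hfS y hy3
  rcases Finset.mem_insert.1 hx2 with hx1 | hx3
  · rcases Finset.mem_insert.1 hy with hy1 | hy2
    · rw [hx1, hy1]; exact hfg.symm
    rcases Finset.mem_insert.1 hy2 with hy1 | hy3
    · exact absurd (hx1.trans hy1.symm) hxy
    · rw [hx1]; exact hgS y hy3
  · rcases Finset.mem_insert.1 hy with hy1 | hy2
    · rw [hy1]; exact (hfS x hx3).symm
    rcases Finset.mem_insert.1 hy2 with hy1 | hy3
    · rw [hy1]; exact (hgS x hx3).symm
    · exact hS x hx3 y hy3 hxy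

lemma pairwise_disjoint_insert1 {β : Type*} [DecidableEq β] (f : Finset β) (S : Finset (Finset β))
    (hfS : ∀ h ∈ S, Disjoint f h)
    (hS : ∀ x ∈ S, ∀ y ∈ S, x ≠ y → Disjoint x y) :
    ∀ x ∈ insert f S, ∀ y ∈ insert f S, x ≠ y → Disjoint x y := by
  intro x hx y hy hxy
  rcases Finset.mem_insert.1 hx with hx1 | hx2
  · rcases Finset.mem_insert.1 hy with hy1 | hy2
    · exact absurd (hx1.trans hy1.symm) hxy
    · rw [hx1]; exact hfS y hy2
  · rcases Finset.mem_insert.1 hy with hy1 | hy2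
    · rw [hy1]; exact (hfS x hx2).symm
    · exact hS x hx2 y hy2 hxy

set_option maxHeartbeats 1000000 in
lemma graph_bound (k : ℕ) (hk : 1 ≤ k) :
    ∀ N : ℕ, ∀ G : Multiset (Finset α), Multiset.card G ≤ N →
    (∀ f ∈ G, Finset.card f = 2) → (∀ x : α, G.countP (x ∈ ·) ≤ k) →
    ∃ M : Finset (Finset α), (∀ f ∈ M, f ∈ G) ∧
      (∀ f ∈ M, ∀ g ∈ M, f ≠ g → Disjoint f g) ∧ Multiset.card G ≤ (3 * k / 2) * M.card := by
  intro N
  induction N with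
  | zero =>
    intro G hG h2 hdeg
    have hG0 : G = 0 := Multiset.card_eq_zero.1 (Nat.le_zero.1 hG)
    subst hG0
    exact ⟨∅, by simp, by simp, by simp⟩
  | succ N ih =>
    intro G hGcard h2 hdeg
    by_cases htri : HasTri G k
    · obtain ⟨u, v, p, huv, hup, hvp, huvG, hupG, hvpG, hIk⟩ := htri
      classical
      set Tri : Finset α := {u, v, p} with hTridef
      have hmemTri : ∀ y : α, y ∈ Tri ↔ (y = u ∨ y = v ∨ y = p) := by
        intro y; simp [hTridef]
      have hTricard : Tri.card = 3 := by
        rw [hTridef, Finset.card_insert_of_notMem (by simp [huv, hup]),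
          Finset.card_insert_of_notMem (by simp [hvp]), Finset.card_singleton]
      set φ : α → α := fun x => if x = v ∨ x = p then u else x with hφ
      have hφeq : ∀ y : α, φ y = u ↔ y ∈ Tri := by
        intro y
        rw [hφ, hmemTri]
        dsimp only
        by_cases h : y = v ∨ y = p
        · rw [if_pos h]
          exact ⟨fun _ => Or.inr h, fun _ => rfl⟩
        · rw [if_neg h]
          push_neg at h
          constructor
          · exact fun h' => Or.inl h'
          · rintro (h' | h' | h')
            · exact h'
            · exact absurd h' h.1
            · exact absurd h' h.2
      have hφfix : ∀ y : α, y ∉ Tri → φ y = y := by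
        intro y hy
        rw [hφ]
        dsimp only
        rw [hmemTri] at hy
        push_neg at hy
        rw [if_neg (by rintro (h | h); exact hy.2.1 h; exact hy.2.2 h)]
      set Gext := G.filter (fun f => ¬ f ⊆ Tri) with hGext
      have hGextG : ∀ f ∈ Gext, f ∈ G := fun f hf => Multiset.mem_of_mem_filter hf
      have hGextnot : ∀ f ∈ Gext, ¬ f ⊆ Tri := fun f hf => (Multiset.mem_filter.1 hf).2
      set Gst := Gext.map (fun f => f.image φ) with hGst
      -- basic structure of edges of Gext
      have hextshape : ∀ f ∈ Gext, ∃ a b : α, a ≠ b ∧ f = {a, b} ∧ b ∉ Tri := by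
        intro f hf
        obtain ⟨a, b, hab, hfab⟩ := Finset.card_eq_two.1 (h2 f (hGextG f hf))
        by_cases hb : b ∈ Tri
        · refine ⟨b, a, hab.symm, by rw [hfab, Finset.pair_comm], ?_⟩
          intro ha
          exact hGextnot f hf (by
            rw [hfab]
            intro z hz
            rcases Finset.mem_insert.1 hz with rfl | hz
            · exact ha
            · exact (Finset.mem_singleton.1 hz) ▸ hb)
        · exact ⟨a, b, hab, hfab, hb⟩
      have himage : ∀ f ∈ Gext, ∀ x : α, x ∈ f.image φ ↔ ∃ y ∈ f, φ y = x := by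
        intro f _ x
        simp [Finset.mem_image]
      -- cards of images
      have h2st : ∀ g ∈ Gst, Finset.card g = 2 := by
        intro g hg
        obtain ⟨f, hf, rfl⟩ := Multiset.mem_map.1 hg
        obtain ⟨a, b, hab, rfl, hbTri⟩ := hextshape f hf
        have himg : ({a, b} : Finset α).image φ = {φ a, b} := by
          rw [Finset.image_insert, Finset.image_singleton, hφfix b hbTri]
        rw [himg]
        rw [Finset.card_insert_of_notMem, Finset.card_singleton]
        intro hmem
        have hba := Finset.mem_singleton.1 hmem
        by_cases haTri : a ∈ Tri
        · have : φ a = u := (hφeq a).2 haTri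
          rw [this] at hba
          exact hbTri (hba ▸ ((hmemTri u).2 (Or.inl rfl)))
        · rw [hφfix a haTri] at hba
          exact hab hba
      -- no v, p in contracted edges
      have hnovp : ∀ g ∈ Gst, v ∉ g ∧ p ∉ g := by
        intro g hg
        obtain ⟨f, hf, rfl⟩ := Multiset.mem_map.1 hg
        constructor
        · intro hmem
          obtain ⟨y, _, hy⟩ := Finset.mem_image.1 hmem
          by_cases hyTri : y ∈ Tri
          · rw [(hφeq y).2 hyTri] at hy
            exact huv hy
          · rw [hφfix y hyTri] at hy
            exact hyTri (hy ▸ ((hmemTri v).2 (Or.inr (Or.inl rfl))))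
        · intro hmem
          obtain ⟨y, _, hy⟩ := Finset.mem_image.1 hmem
          by_cases hyTri : y ∈ Tri
          · rw [(hφeq y).2 hyTri] at hy
            exact hup hy
          · rw [hφfix y hyTri] at hy
            exact hyTri (hy ▸ ((hmemTri p).2 (Or.inr (Or.inr rfl))))
      -- lifting edges avoiding u
      have hlift : ∀ g ∈ Gst, u ∉ g → g ∈ Gext ∧ ∀ y ∈ g, y ∉ Tri := by
        intro g hg hug
        obtain ⟨f, hf, rfl⟩ := Multiset.mem_map.1 hg
        have havoid : ∀ y ∈ f, y ∉ Tri := by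
          intro y hy hyTri
          exact hug (Finset.mem_image.2 ⟨y, hy, (hφeq y).2 hyTri⟩)
        have hfix : f.image φ = f := by
          rw [Finset.image_congr (fun y hy => hφfix y (havoid y hy)), Finset.image_id']
        rw [hfix]
        exact ⟨hf, havoid⟩
      -- the degree double counting around the triangle
      have hsumid : (∑ w ∈ Tri, G.countP (fun f => w ∈ f))
          = (G.map (fun f => (Tri.filter (fun w => w ∈ f)).card)).sum :=
        sum_countP Tri G _
      have hsum3k : (∑ w ∈ Tri, G.countP (fun f => w ∈ f)) ≤ 3 * k := by
        calc (∑ w ∈ Tri, G.countP (fun f => w ∈ f)) ≤ Tri.card • k :=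
              Finset.sum_le_card_nsmul Tri _ k (fun w _ => hdeg w)
          _ = 3 * k := by rw [hTricard, smul_eq_mul]
      have hGsplit : G.filter (fun f => f ⊆ Tri) + Gext = G := by
        rw [hGext]
        exact Multiset.filter_add_not _ G
      have hmapsplit : (G.map (fun f => (Tri.filter (fun w => w ∈ f)).card)).sum
          = ((G.filter (fun f => f ⊆ Tri)).map (fun f => (Tri.filter (fun w => w ∈ f)).card)).sum
            + (Gext.map (fun f => (Tri.filter (fun w => w ∈ f)).card)).sum := by
        conv_lhs => rw [← hGsplit]
        rw [Multiset.map_add, Multiset.sum_add]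
      have hIfil : Multiset.card (G.filter (fun f => f ⊆ Tri)) = G.countP (· ⊆ Tri) :=
        (Multiset.countP_eq_card_filter _ _).symm
      have hlow1 : 2 * G.countP (· ⊆ Tri)
          ≤ ((G.filter (fun f => f ⊆ Tri)).map (fun f => (Tri.filter (fun w => w ∈ f)).card)).sum := by
        have hcongr : ((G.filter (fun f => f ⊆ Tri)).map
            (fun f => (Tri.filter (fun w => w ∈ f)).card)).sum
            = ((G.filter (fun f => f ⊆ Tri)).map (fun _ => 2)).sum := by
          refine congrArg Multiset.sum (Multiset.map_congr rfl (fun f hf => ?_))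
          have hfsub : f ⊆ Tri := (Multiset.mem_filter.1 hf).2
          have hfG : f ∈ G := Multiset.mem_of_mem_filter hf
          have : Tri.filter (fun w => w ∈ f) = f := by
            apply Finset.ext
            intro a
            simp only [Finset.mem_filter]
            exact ⟨fun h => h.2, fun h => ⟨hfsub h, h⟩⟩
          rw [this, h2 f hfG]
        rw [hcongr, Multiset.map_const', Multiset.sum_replicate, smul_eq_mul, hIfil, mul_comm]
      have hlow2 : Gext.countP (fun f => ∃ y ∈ f, y ∈ Tri)
          ≤ (Gext.map (fun f => (Tri.filter (fun w => w ∈ f)).card)).sum := by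
        have h1 : (1 : ℕ) * Gext.countP (fun f => ∃ y ∈ f, y ∈ Tri)
            = (Gext.map (fun f => if (∃ y ∈ f, y ∈ Tri) then 1 else 0)).sum :=
          (sum_map_ite Gext _ 1).symm
        rw [← one_mul (Gext.countP _), h1]
        refine Multiset.sum_map_le_sum_map _ _ (fun f _ => ?_)
        by_cases hE : ∃ y ∈ f, y ∈ Tri
        · rw [if_pos hE]
          obtain ⟨y, hyf, hyTri⟩ := hE
          exact Finset.card_pos.2 ⟨y, Finset.mem_filter.2 ⟨hyTri, hyf⟩⟩
        · rw [if_neg hE]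
          exact Nat.zero_le _
      have hmeetk : Gext.countP (fun f => ∃ y ∈ f, y ∈ Tri) ≤ k := by omega
      have hI32 : G.countP (· ⊆ Tri) ≤ 3 * k / 2 := by omega
      -- degrees in the contracted graph
      have hdegst : ∀ x : α, Gst.countP (x ∈ ·) ≤ k := by
        intro x
        have hcmap : Gst.countP (x ∈ ·) = Gext.countP (fun f => x ∈ f.image φ) := by
          rw [hGst, Multiset.countP_map, Multiset.countP_eq_card_filter]
        by_cases hxvp : x = v ∨ x = p
        · have : Gst.countP (x ∈ ·) = 0 := by
            rw [Multiset.countP_eq_zero]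
            intro g hg hxg
            rcases hxvp with rfl | rfl
            · exact (hnovp g hg).1 hxg
            · exact (hnovp g hg).2 hxg
          omega
        by_cases hxu : x = u
        · subst hxu
          rw [hcmap]
          have : Gext.countP (fun f => x ∈ f.image φ)
              = Gext.countP (fun f => ∃ y ∈ f, y ∈ Tri) := by
            refine Multiset.countP_congr rfl (fun f hf => propext ?_)
            rw [himage f hf]
            constructor
            · rintro ⟨y, hy, hyx⟩
              exact ⟨y, hy, (hφeq y).1 hyx⟩
            · rintro ⟨y, hy, hyTri⟩
              exact ⟨y, hy, (hφeq y).2 hyTri⟩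
          rw [this]
          exact hmeetk
        · rw [hcmap]
          have hxTri : x ∉ Tri := by
            rw [hmemTri]
            push_neg
            exact ⟨hxu, fun h => hxvp (Or.inl h), fun h => hxvp (Or.inr h)⟩
          have : Gext.countP (fun f => x ∈ f.image φ) = Gext.countP (fun f => x ∈ f) := by
            refine Multiset.countP_congr rfl (fun f hf => propext ?_)
            rw [himage f hf]
            constructor
            · rintro ⟨y, hy, hyx⟩
              by_cases hyTri : y ∈ Tri
              · rw [(hφeq y).2 hyTri] at hyx
                exact absurd hyx.symm hxu
              · rw [hφfix y hyTri] at hyx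
                exact hyx ▸ hy
            · intro hx
              exact ⟨x, hx, hφfix x hxTri⟩
          rw [this]
          calc Gext.countP (fun f => x ∈ f) ≤ G.countP (fun f => x ∈ f) :=
                Multiset.countP_le_of_le _ (Multiset.filter_le _ G)
            _ ≤ k := hdeg x
      -- cardinalities
      have hcards : Multiset.card G = G.countP (· ⊆ Tri) + Multiset.card Gst := by
        rw [hGst, Multiset.card_map]
        conv_lhs => rw [← hGsplit]
        rw [Multiset.card_add, hIfil]
      have hGstN : Multiset.card Gst ≤ N := by
        have h1 : Multiset.card G ≤ N + 1 := hGcard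
        omega
      obtain ⟨Ms, hMsG, hMsdisj, hMsbound⟩ := ih Gst hGstN h2st hdegst
      by_cases hexu : ∃ f₀ ∈ Ms, u ∈ f₀
      · obtain ⟨f₀, hf₀Ms, huf₀⟩ := hexu
        obtain ⟨f, hfGext, hfim⟩ := Multiset.mem_map.1 (hMsG f₀ hf₀Ms)
        have huim : u ∈ f.image φ := by rw [hfim]; exact huf₀
        obtain ⟨w, hwf, hwu⟩ := Finset.mem_image.1 huim
        have hwTri : w ∈ Tri := (hφeq w).1 hwu
        obtain ⟨a, b, hab, hfab, hbTri⟩ := hextshape f hfGext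
        have hwa : w = a := by
          rw [hfab] at hwf
          rcases Finset.mem_insert.1 hwf with h | h
          · exact h
          · exact absurd ((Finset.mem_singleton.1 h) ▸ hwTri) hbTri
        subst hwa
        have hf₀eq : f₀ = {u, b} := by
          rw [← hfim, hfab, Finset.image_insert, Finset.image_singleton, hwu, hφfix b hbTri]
        have hbf₀ : b ∈ f₀ := by rw [hf₀eq]; simp
        obtain ⟨g, hgG, hgTri, hwg, hgne⟩ :
            ∃ g : Finset α, g ∈ G ∧ g ⊆ Tri ∧ w ∉ g ∧ g.Nonempty := by
          rcases (hmemTri w).1 hwTri with hweq | hweq | hweq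
          · refine ⟨{v, p}, hvpG, ?_, ?_, ⟨v, by simp⟩⟩
            · intro z hz
              rw [hmemTri]
              rcases Finset.mem_insert.1 hz with hz1 | hz
              · exact Or.inr (Or.inl hz1)
              · exact Or.inr (Or.inr (Finset.mem_singleton.1 hz))
            · rw [hweq]
              intro hmem
              rcases Finset.mem_insert.1 hmem with h | h
              · exact huv h
              · exact hup (Finset.mem_singleton.1 h)
          · refine ⟨{u, p}, hupG, ?_, ?_, ⟨u, by simp⟩⟩
            · intro z hz
              rw [hmemTri]
              rcases Finset.mem_insert.1 hz with hz1 | hz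
              · exact Or.inl hz1
              · exact Or.inr (Or.inr (Finset.mem_singleton.1 hz))
            · rw [hweq]
              intro hmem
              rcases Finset.mem_insert.1 hmem with h | h
              · exact huv h.symm
              · exact hvp (Finset.mem_singleton.1 h)
          · refine ⟨{u, v}, huvG, ?_, ?_, ⟨u, by simp⟩⟩
            · intro z hz
              rw [hmemTri]
              rcases Finset.mem_insert.1 hz with hz1 | hz
              · exact Or.inl hz1
              · exact Or.inr (Or.inl (Finset.mem_singleton.1 hz))
            · rw [hweq]
              intro hmem
              rcases Finset.mem_insert.1 hmem with h | h
              · exact hup h.symm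
              · exact hvp (Finset.mem_singleton.1 h).symm
        have herase : ∀ f' ∈ Ms.erase f₀, u ∉ f' ∧ f' ∈ G ∧ (∀ z ∈ f', z ∉ Tri) := by
          intro f' hf'
          have hf'Ms := Finset.mem_of_mem_erase hf'
          have hf'ne := Finset.ne_of_mem_erase hf'
          have hunotf' : u ∉ f' := by
            intro hu'
            exact Finset.disjoint_left.1 (hMsdisj f' hf'Ms f₀ hf₀Ms hf'ne) hu' huf₀
          obtain ⟨hf'Gext, hf'avoid⟩ := hlift f' (hMsG f' hf'Ms) hunotf'
          exact ⟨hunotf', hGextG f' hf'Gext, hf'avoid⟩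
        have hmemf : ∀ z ∈ f, z = w ∨ z = b := by
          intro z hz
          rw [hfab] at hz
          rcases Finset.mem_insert.1 hz with h | h
          · exact Or.inl h
          · exact Or.inr (Finset.mem_singleton.1 h)
        have hDfg : Disjoint f g := by
          rw [Finset.disjoint_left]
          intro z hz hzg
          rcases hmemf z hz with rfl | rfl
          · exact hwg hzg
          · exact hbTri (hgTri hzg)
        have hDfold : ∀ f' ∈ Ms.erase f₀, Disjoint f f' := by
          intro f' hf'
          obtain ⟨hu', hG', havoid'⟩ := herase f' hf'
          rw [Finset.disjoint_left]
          intro z hz hzf'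
          rcases hmemf z hz with rfl | rfl
          · exact havoid' z hzf' hwTri
          · have hf'ne := Finset.ne_of_mem_erase hf'
            exact Finset.disjoint_left.1
              (hMsdisj f' (Finset.mem_of_mem_erase hf') f₀ hf₀Ms hf'ne) hzf' hbf₀
        have hDgold : ∀ f' ∈ Ms.erase f₀, Disjoint g f' := by
          intro f' hf'
          obtain ⟨hu', hG', havoid'⟩ := herase f' hf'
          rw [Finset.disjoint_left]
          intro z hz hzf'
          exact havoid' z hzf' (hgTri hz)
        have hwfmem : w ∈ f := by rw [hfab]; simp
        have hbfmem : b ∈ f := by rw [hfab]; simp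
        have hfnot : f ∉ insert g (Ms.erase f₀) := by
          intro hmem
          rcases Finset.mem_insert.1 hmem with rfl | hmem
          · exact hwg hwfmem
          · exact (herase f hmem).2.2 w hwfmem hwTri
        have hgnot : g ∉ Ms.erase f₀ := by
          intro hmem
          obtain ⟨z, hz⟩ := hgne
          exact (herase g hmem).2.2 z hz (hgTri hz)
        refine ⟨insert f (insert g (Ms.erase f₀)), ?_, ?_, ?_⟩
        · intro x hx
          rcases Finset.mem_insert.1 hx with hx1 | hx
          · rw [hx1]; exact hGextG f hfGext
          rcases Finset.mem_insert.1 hx with hx1 | hx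
          · rw [hx1]; exact hgG
          · exact (herase x hx).2.1
        · exact pairwise_disjoint_insert2 f g (Ms.erase f₀) hDfg hDfold hDgold
            (fun x hx y hy hxy => hMsdisj x (Finset.mem_of_mem_erase hx) y
              (Finset.mem_of_mem_erase hy) hxy)
        · have hc1 : (insert f (insert g (Ms.erase f₀))).card = Ms.card + 1 := by
            rw [Finset.card_insert_of_notMem hfnot, Finset.card_insert_of_notMem hgnot,
              Finset.card_erase_of_mem hf₀Ms]
            have : 1 ≤ Ms.card := Finset.card_pos.2 ⟨f₀, hf₀Ms⟩
            omega
          rw [hc1, Nat.mul_succ]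
          omega
      · push_neg at hexu
        have hall : ∀ f' ∈ Ms, f' ∈ G ∧ (∀ z ∈ f', z ∉ Tri) := by
          intro f' hf'
          obtain ⟨hf'Gext, hf'avoid⟩ := hlift f' (hMsG f' hf') (hexu f' hf')
          exact ⟨hGextG f' hf'Gext, hf'avoid⟩
        have hDnew : ∀ f' ∈ Ms, Disjoint ({u, v} : Finset α) f' := by
          intro f' hf'
          rw [Finset.disjoint_left]
          intro z hz hzf'
          refine (hall f' hf').2 z hzf' ?_
          rw [hmemTri]
          rcases Finset.mem_insert.1 hz with rfl | hz
          · exact Or.inl rfl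
          · exact Or.inr (Or.inl (Finset.mem_singleton.1 hz))
        have hnotin : ({u, v} : Finset α) ∉ Ms := by
          intro hmem
          exact hexu _ hmem (by simp)
        refine ⟨insert ({u, v} : Finset α) Ms, ?_, ?_, ?_⟩
        · intro x hx
          rcases Finset.mem_insert.1 hx with hx1 | hx
          · rw [hx1]; exact huvG
          · exact (hall x hx).1
        · exact pairwise_disjoint_insert1 _ Ms hDnew hMsdisj
        · rw [Finset.card_insert_of_notMem hnotin, Nat.mul_succ]
          omega
    · exact no_tri_bound k G h2 hdeg htri

set_option maxHeartbeats 1000000 in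
lemma cm_main {V : Type*} [DecidableEq V] (k : ℕ) (hk : 2 ≤ k) :
    ∀ N : ℕ, ∀ E : Multiset (Finset V), Multiset.card E ≤ N →
    (∀ e ∈ E, Finset.card e = k) →
    ∃ T : Finset V, (∀ e ∈ E, (T ∩ e).Nonempty) ∧ (∀ x ∈ T, ∃ e ∈ E, x ∈ e) ∧
      (3 * k / 2) * T.card ≤ (E.toFinset.sup id).card + (k / 2) * Multiset.card E := by
  classical
  intro N
  induction N with
  | zero =>
    intro E hE _
    have hE0 : E = 0 := Multiset.card_eq_zero.1 (Nat.le_zero.1 hE)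
    subst hE0
    exact ⟨∅, by simp, by simp, by simp⟩
  | succ N ih =>
    intro E hEcard hcard
    by_cases hdup : ∃ e ∈ E, 2 ≤ E.count e
    · -- remove a duplicated edge
      obtain ⟨e, heE, hcnt⟩ := hdup
      have hE'card : Multiset.card (E.erase e) = Multiset.card E - 1 :=
        Multiset.card_erase_of_mem heE
      have hcard' : ∀ e' ∈ E.erase e, Finset.card e' = k :=
        fun e' he' => hcard e' (Multiset.mem_of_mem_erase he')
      have hle : Multiset.card (E.erase e) ≤ N := by
        have h1 : 0 < Multiset.card E := Multiset.card_pos_iff_exists_mem.2 ⟨e, heE⟩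
        omega
      obtain ⟨T, hT1, hT2, hT3⟩ := ih (E.erase e) hle hcard'
      have heE' : e ∈ E.erase e := by
        rw [← Multiset.count_pos, Multiset.count_erase_self]
        omega
      have htofin : (E.erase e).toFinset = E.toFinset := by
        apply Finset.ext
        intro a
        rw [Multiset.mem_toFinset, Multiset.mem_toFinset]
        constructor
        · exact Multiset.mem_of_mem_erase
        · intro ha
          by_cases hae : a = e
          · subst hae; exact heE'
          · exact Multiset.mem_erase_of_ne hae |>.2 ha
      refine ⟨T, ?_, ?_, ?_⟩
      · intro e' he'
        by_cases h : e' = e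
        · subst h; exact hT1 e' heE'
        · exact hT1 e' (Multiset.mem_erase_of_ne h |>.2 he')
      · intro x hx
        obtain ⟨e', he', hxe'⟩ := hT2 x hx
        exact ⟨e', Multiset.mem_of_mem_erase he', hxe'⟩
      · rw [htofin] at hT3
        have hmul : (k / 2) * Multiset.card (E.erase e) ≤ (k / 2) * Multiset.card E :=
          Nat.mul_le_mul_left _ (by omega)
        omega
    by_cases hdeg3 : ∃ x : V, 3 ≤ E.countP (x ∈ ·)
    · obtain ⟨x, hx3⟩ := hdeg3
      set E' := E.filter (fun e => x ∉ e) with hE'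
      have hsplitc : E.countP (fun e => x ∈ e) + Multiset.card E' = Multiset.card E := by
        rw [hE', Multiset.countP_eq_card_filter]
        have := Multiset.filter_add_not (fun e => x ∈ e) E
        calc Multiset.card (E.filter (fun e => x ∈ e)) + Multiset.card (E.filter (fun e => ¬ x ∈ e))
            = Multiset.card (E.filter (fun e => x ∈ e) + E.filter (fun e => ¬ x ∈ e)) :=
              (Multiset.card_add _ _).symm
          _ = Multiset.card E := by rw [this]
      have hE'le : Multiset.card E' ≤ N := by omega
      have hcard' : ∀ e' ∈ E', Finset.card e' = k :=
        fun e' he' => hcard e' (Multiset.mem_of_mem_filter he')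
      obtain ⟨T', hT1, hT2, hT3⟩ := ih E' hE'le hcard'
      refine ⟨insert x T', ?_, ?_, ?_⟩
      · intro e he
        by_cases hxe : x ∈ e
        · exact ⟨x, Finset.mem_inter.2 ⟨Finset.mem_insert_self _ _, hxe⟩⟩
        · obtain ⟨z, hz⟩ := hT1 e (Multiset.mem_filter.2 ⟨he, hxe⟩)
          rw [Finset.mem_inter] at hz
          exact ⟨z, Finset.mem_inter.2 ⟨Finset.mem_insert_of_mem hz.1, hz.2⟩⟩
      · intro z hz
        rcases Finset.mem_insert.1 hz with rfl | hz
        · obtain ⟨e, he, hxe⟩ := Multiset.countP_pos.1 (by omega : 0 < E.countP (z ∈ ·))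
          exact ⟨e, he, hxe⟩
        · obtain ⟨e, he, hze⟩ := hT2 z hz
          exact ⟨e, Multiset.mem_of_mem_filter he, hze⟩
      · -- the counting
        have hsupp : (E'.toFinset.sup id) ⊆ (E.toFinset.sup id).erase x := by
          intro z hz
          obtain ⟨e, he, hze⟩ := Finset.mem_sup.1 hz
          rw [Multiset.mem_toFinset] at he
          have hxe : x ∉ e := (Multiset.mem_filter.1 he).2
          refine Finset.mem_erase.2 ⟨fun h => hxe (h ▸ hze), ?_⟩
          exact Finset.mem_sup.2 ⟨e, Multiset.mem_toFinset.2 (Multiset.mem_of_mem_filter he), hze⟩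
        have hxsup : x ∈ E.toFinset.sup id := by
          obtain ⟨e, he, hxe⟩ := Multiset.countP_pos.1 (by omega : 0 < E.countP (x ∈ ·))
          exact Finset.mem_sup.2 ⟨e, Multiset.mem_toFinset.2 he, hxe⟩
        have hs1 : (E'.toFinset.sup id).card + 1 ≤ (E.toFinset.sup id).card := by
          have h1 := Finset.card_le_card hsupp
          have h2 : ((E.toFinset.sup id).erase x).card = (E.toFinset.sup id).card - 1 :=
            Finset.card_erase_of_mem hxsup
          have h3 : 0 < (E.toFinset.sup id).card := Finset.card_pos.2 ⟨x, hxsup⟩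
          omega
        have hm3 : Multiset.card E' + 3 ≤ Multiset.card E := by omega
        have hmul : (k / 2) * Multiset.card E' + (k / 2) * 3 ≤ (k / 2) * Multiset.card E := by
          calc (k / 2) * Multiset.card E' + (k / 2) * 3 = (k / 2) * (Multiset.card E' + 3) :=
                (Nat.mul_add _ _ _).symm
            _ ≤ (k / 2) * Multiset.card E := Nat.mul_le_mul_left _ hm3
        have hins : (insert x T').card ≤ T'.card + 1 := Finset.card_insert_le _ _
        have hmulT : (3 * k / 2) * (insert x T').card
            ≤ (3 * k / 2) * T'.card + (3 * k / 2) := by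
          calc (3 * k / 2) * (insert x T').card ≤ (3 * k / 2) * (T'.card + 1) :=
                Nat.mul_le_mul_left _ hins
            _ = (3 * k / 2) * T'.card + (3 * k / 2) := by rw [Nat.mul_succ]
        omega
    · -- the core case : no duplicates, max degree ≤ 2
      push_neg at hdup hdeg3
      have hnodup : E.Nodup := by
        rw [Multiset.nodup_iff_count_le_one]
        intro a
        by_cases ha : a ∈ E
        · have := hdup a ha; omega
        · rw [Multiset.count_eq_zero_of_notMem ha]
          omega
      have hd2 : ∀ x : V, E.countP (x ∈ ·) ≤ 2 := fun x => by have := hdeg3 x; omega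
      have hEfinval : E.toFinset.val = E := by
        rw [Multiset.toFinset_val, Multiset.dedup_eq_self.2 hnodup]
      have hEfincard : E.toFinset.card = Multiset.card E := Multiset.toFinset_card_of_nodup hnodup
      set supp := E.toFinset.sup id with hsuppdef
      have hsuppmem : ∀ z : V, z ∈ supp ↔ ∃ e ∈ E, z ∈ e := by
        intro z
        rw [hsuppdef, Finset.mem_sup]
        constructor
        · rintro ⟨e, he, hz⟩; exact ⟨e, Multiset.mem_toFinset.1 he, hz⟩
        · rintro ⟨e, he, hz⟩; exact ⟨e, Multiset.mem_toFinset.2 he, hz⟩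
      set D2 := supp.filter (fun z => E.countP (z ∈ ·) = 2) with hD2def
      set idx : V → Finset (Finset V) := fun z => E.toFinset.filter (fun e => z ∈ e) with hidx
      have hidxcard : ∀ z : V, (idx z).card = E.countP (z ∈ ·) := by
        intro z
        calc (idx z).card = Multiset.card ((E.toFinset.filter (fun e => z ∈ e)).val) := rfl
          _ = Multiset.card (E.toFinset.val.filter (fun e => z ∈ e)) := by
              rw [Finset.filter_val]
          _ = Multiset.card (E.filter (fun e => z ∈ e)) := by rw [hEfinval]
          _ = E.countP (fun e => z ∈ e) := (Multiset.countP_eq_card_filter _ _).symm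
      have hidxmem : ∀ z : V, ∀ e : Finset V, e ∈ idx z ↔ (e ∈ E ∧ z ∈ e) := by
        intro z e
        rw [hidx]
        simp only [Finset.mem_filter, Multiset.mem_toFinset]
      set G := D2.val.map idx with hG
      have h2G : ∀ f ∈ G, Finset.card f = 2 := by
        intro f hf
        obtain ⟨z, hz, hzf⟩ := Multiset.mem_map.1 hf
        rw [← hzf, hidxcard z]
        exact (Finset.mem_filter.1 (Finset.mem_def.2 hz)).2
      have hdegG : ∀ e : Finset V, G.countP (e ∈ ·) ≤ k := by
        intro e
        rw [hG, Multiset.countP_map]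
        rw [← Multiset.countP_eq_card_filter]
        by_cases heE : e ∈ E
        · calc D2.val.countP (fun z => e ∈ idx z)
              ≤ D2.val.countP (fun z => z ∈ e) :=
                countP_le_countP _ _ _ (fun z _ hz => ((hidxmem z e).1 hz).2)
            _ = (D2.filter (fun z => z ∈ e)).card := by
                rw [Multiset.countP_eq_card_filter, ← Finset.filter_val]
                rfl
            _ ≤ e.card := Finset.card_le_card
                (fun z hz => (Finset.mem_filter.1 hz).2)
            _ = k := hcard e heE
        · have : D2.val.countP (fun z => e ∈ idx z) = 0 := by
            rw [Multiset.countP_eq_zero]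
            intro z _ hz
            exact heE ((hidxmem z e).1 hz).1
          omega
      obtain ⟨M, hMG, hMdisj, hGM⟩ := graph_bound k (by omega) (Multiset.card G) G le_rfl
        h2G hdegG
      have hGcard : Multiset.card G = D2.card := by rw [hG, Multiset.card_map]; rfl
      set VM := M.biUnion id with hVM
      have hVMmem : ∀ e : Finset V, e ∈ VM ↔ ∃ f ∈ M, e ∈ f := by intro e; simp [hVM]
      set P := E.toFinset.filter (fun e => ∃ z ∈ D2, z ∈ e) with hP
      have hVMsubP : VM ⊆ P := by
        intro e he
        obtain ⟨f, hfM, hef⟩ := (hVMmem e).1 he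
        obtain ⟨z, hz, hzf⟩ := Multiset.mem_map.1 (hMG f hfM)
        rw [← hzf] at hef
        have h1 := (hidxmem z e).1 hef
        exact Finset.mem_filter.2 ⟨Multiset.mem_toFinset.2 h1.1, z, Finset.mem_def.2 hz, h1.2⟩
      have hVMcard : VM.card = 2 * M.card := by
        have hcb := Finset.card_biUnion (s := M) (t := id)
          (fun x hx y hy hne => hMdisj x hx y hy hne)
        rw [hVM, hcb, Finset.sum_congr rfl (fun f hf => (h2G f (hMG f hf) : (id f).card = 2)),
          Finset.sum_const, smul_eq_mul, mul_comm]
      have hPsub : P ⊆ E.toFinset := Finset.filter_subset _ _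
      -- transversal construction by choice
      set sel1 : Finset (Finset V) → Finset V := fun f =>
        if h : ∃ z, z ∈ D2.val ∧ idx z = f then {h.choose} else ∅ with hsel1
      set sel2 : Finset V → Finset V := fun e =>
        if h : ∃ z, z ∈ D2 ∧ z ∈ e then {h.choose} else ∅ with hsel2
      set sel3 : Finset V → Finset V := fun e =>
        if h : ∃ z, z ∈ e then {h.choose} else ∅ with hsel3
      set T := (M.biUnion sel1 ∪ (P \ VM).biUnion sel2) ∪ (E.toFinset \ P).biUnion sel3
        with hT
      have htrans : ∀ e ∈ E, (T ∩ e).Nonempty := by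
        intro e heE
        have hefin : e ∈ E.toFinset := Multiset.mem_toFinset.2 heE
        by_cases heVM : e ∈ VM
        · obtain ⟨f, hfM, hef⟩ := (hVMmem e).1 heVM
          have hex : ∃ z, z ∈ D2.val ∧ idx z = f := Multiset.mem_map.1 (hMG f hfM)
          have hzspec := hex.choose_spec
          have hz₀e : hex.choose ∈ e := by
            have h1 : e ∈ idx hex.choose := by rw [hzspec.2]; exact hef
            exact ((hidxmem _ e).1 h1).2
          have hz₀T : hex.choose ∈ T := by
            rw [hT]
            refine Finset.mem_union_left _ (Finset.mem_union_left _ ?_)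
            refine Finset.mem_biUnion.2 ⟨f, hfM, ?_⟩
            rw [hsel1]
            dsimp only
            rw [dif_pos hex]
            exact Finset.mem_singleton_self _
          exact ⟨hex.choose, Finset.mem_inter.2 ⟨hz₀T, hz₀e⟩⟩
        by_cases heP : e ∈ P
        · have hex : ∃ z, z ∈ D2 ∧ z ∈ e := (Finset.mem_filter.1 heP).2
          have hzspec := hex.choose_spec
          have hz₀T : hex.choose ∈ T := by
            rw [hT]
            refine Finset.mem_union_left _ (Finset.mem_union_right _ ?_)
            refine Finset.mem_biUnion.2 ⟨e, Finset.mem_sdiff.2 ⟨heP, heVM⟩, ?_⟩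
            rw [hsel2]
            dsimp only
            rw [dif_pos hex]
            exact Finset.mem_singleton_self _
          exact ⟨hex.choose, Finset.mem_inter.2 ⟨hz₀T, hzspec.2⟩⟩
        · have hex : ∃ z, z ∈ e := by
            have h1 : 0 < e.card := by rw [hcard e heE]; omega
            obtain ⟨z, hz⟩ := Finset.card_pos.1 h1
            exact ⟨z, hz⟩
          have hzspec := hex.choose_spec
          have hz₀T : hex.choose ∈ T := by
            rw [hT]
            refine Finset.mem_union_right _ ?_
            refine Finset.mem_biUnion.2 ⟨e, Finset.mem_sdiff.2 ⟨hefin, heP⟩, ?_⟩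
            rw [hsel3]
            dsimp only
            rw [dif_pos hex]
            exact Finset.mem_singleton_self _
          exact ⟨hex.choose, Finset.mem_inter.2 ⟨hz₀T, hzspec⟩⟩
      have hD2supp : ∀ z ∈ D2, ∃ e ∈ E, z ∈ e := by
        intro z hz
        exact (hsuppmem z).1 (Finset.mem_of_mem_filter _ hz)
      have hsupport : ∀ z ∈ T, ∃ e ∈ E, z ∈ e := by
        intro z hz
        rw [hT] at hz
        rcases Finset.mem_union.1 hz with hz | hz
        · rcases Finset.mem_union.1 hz with hz | hz
          · obtain ⟨f, hfM, hzf⟩ := Finset.mem_biUnion.1 hz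
            rw [hsel1] at hzf
            dsimp only at hzf
            by_cases hex : ∃ w, w ∈ D2.val ∧ idx w = f
            · rw [dif_pos hex] at hzf
              have hzeq := Finset.mem_singleton.1 hzf
              rw [hzeq]
              exact hD2supp _ (Finset.mem_def.2 hex.choose_spec.1)
            · rw [dif_neg hex] at hzf
              exact absurd hzf (Finset.notMem_empty z)
          · obtain ⟨e, _, hze⟩ := Finset.mem_biUnion.1 hz
            rw [hsel2] at hze
            dsimp only at hze
            by_cases hex : ∃ w, w ∈ D2 ∧ w ∈ e
            · rw [dif_pos hex] at hze
              have hzeq := Finset.mem_singleton.1 hze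
              rw [hzeq]
              exact hD2supp _ hex.choose_spec.1
            · rw [dif_neg hex] at hze
              exact absurd hze (Finset.notMem_empty z)
        · obtain ⟨e, hemem, hze⟩ := Finset.mem_biUnion.1 hz
          have heE : e ∈ E := Multiset.mem_toFinset.1 (Finset.mem_sdiff.1 hemem).1
          rw [hsel3] at hze
          dsimp only at hze
          by_cases hex : ∃ w, w ∈ e
          · rw [dif_pos hex] at hze
            have hzeq := Finset.mem_singleton.1 hze
            rw [hzeq]
            exact ⟨e, heE, hex.choose_spec⟩
          · rw [dif_neg hex] at hze
            exact absurd hze (Finset.notMem_empty z)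
      -- cardinality of T
      have hs1c : ∀ f : Finset (Finset V), (sel1 f).card ≤ 1 := by
        intro f
        rw [hsel1]
        dsimp only
        split
        · rw [Finset.card_singleton]
        · simp
      have hs2c : ∀ e : Finset V, (sel2 e).card ≤ 1 := by
        intro e
        rw [hsel2]
        dsimp only
        split
        · rw [Finset.card_singleton]
        · simp
      have hs3c : ∀ e : Finset V, (sel3 e).card ≤ 1 := by
        intro e
        rw [hsel3]
        dsimp only
        split
        · rw [Finset.card_singleton]
        · simp
      have hbU1 : (M.biUnion sel1).card ≤ M.card := by
        calc (M.biUnion sel1).card ≤ ∑ f ∈ M, (sel1 f).card := Finset.card_biUnion_le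
          _ ≤ M.card • 1 := Finset.sum_le_card_nsmul _ _ _ (fun f _ => hs1c f)
          _ = M.card := by rw [smul_eq_mul, mul_one]
      have hbU2 : ((P \ VM).biUnion sel2).card ≤ (P \ VM).card := by
        calc ((P \ VM).biUnion sel2).card ≤ ∑ e ∈ P \ VM, (sel2 e).card :=
              Finset.card_biUnion_le
          _ ≤ (P \ VM).card • 1 := Finset.sum_le_card_nsmul _ _ _ (fun e _ => hs2c e)
          _ = (P \ VM).card := by rw [smul_eq_mul, mul_one]
      have hbU3 : ((E.toFinset \ P).biUnion sel3).card ≤ (E.toFinset \ P).card := by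
        calc ((E.toFinset \ P).biUnion sel3).card ≤ ∑ e ∈ E.toFinset \ P, (sel3 e).card :=
              Finset.card_biUnion_le
          _ ≤ (E.toFinset \ P).card • 1 := Finset.sum_le_card_nsmul _ _ _ (fun e _ => hs3c e)
          _ = (E.toFinset \ P).card := by rw [smul_eq_mul, mul_one]
      have hTcard : T.card + M.card ≤ Multiset.card E := by
        have h1 : T.card ≤ (M.biUnion sel1).card + ((P \ VM).biUnion sel2).card
            + ((E.toFinset \ P).biUnion sel3).card := by
          rw [hT]
          calc ((M.biUnion sel1 ∪ (P \ VM).biUnion sel2) ∪ (E.toFinset \ P).biUnion sel3).card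
              ≤ (M.biUnion sel1 ∪ (P \ VM).biUnion sel2).card
                + ((E.toFinset \ P).biUnion sel3).card := Finset.card_union_le _ _
            _ ≤ (M.biUnion sel1).card + ((P \ VM).biUnion sel2).card
                + ((E.toFinset \ P).biUnion sel3).card := by
                have := Finset.card_union_le (M.biUnion sel1) ((P \ VM).biUnion sel2)
                omega
        have h2 : (P \ VM).card = P.card - VM.card := Finset.card_sdiff_of_subset hVMsubP
        have h3 : (E.toFinset \ P).card = E.toFinset.card - P.card := Finset.card_sdiff_of_subset hPsub
        have h4 : VM.card ≤ P.card := Finset.card_le_card hVMsubP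
        have h5 : P.card ≤ E.toFinset.card := Finset.card_le_card hPsub
        omega
      -- double counting of degrees
      have hdc : k * Multiset.card E ≤ supp.card + D2.card := by
        have hid : (∑ z ∈ supp, E.countP (fun e => z ∈ e))
            = (E.map (fun e => (supp.filter (fun z => z ∈ e)).card)).sum := sum_countP supp E _
        have hpt : ∀ e ∈ E, (supp.filter (fun z => z ∈ e)).card = k := by
          intro e he
          have hesub : ∀ z ∈ e, z ∈ supp := fun z hz => (hsuppmem z).2 ⟨e, he, hz⟩
          have heq : supp.filter (fun z => z ∈ e) = e := by
            apply Finset.ext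
            intro z
            simp only [Finset.mem_filter]
            exact ⟨fun h => h.2, fun h => ⟨hesub z h, h⟩⟩
          rw [heq, hcard e he]
        have hrhs : (E.map (fun e => (supp.filter (fun z => z ∈ e)).card)).sum
            = k * Multiset.card E := by
          rw [Multiset.map_congr rfl hpt, Multiset.map_const', Multiset.sum_replicate,
            smul_eq_mul, mul_comm]
        have hlhs : (∑ z ∈ supp, E.countP (fun e => z ∈ e)) ≤ supp.card + D2.card := by
          have hptw : ∀ z ∈ supp, E.countP (fun e => z ∈ e)
              ≤ 1 + (if E.countP (fun e => z ∈ e) = 2 then 1 else 0) := by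
            intro z hz
            have h1 : 0 < E.countP (fun e => z ∈ e) := by
              obtain ⟨e, he, hze⟩ := (hsuppmem z).1 hz
              exact Multiset.countP_pos.2 ⟨e, he, hze⟩
            have h2 := hd2 z
            by_cases hc : E.countP (fun e => z ∈ e) = 2
            · rw [if_pos hc]; omega
            · rw [if_neg hc]; omega
          calc (∑ z ∈ supp, E.countP (fun e => z ∈ e))
              ≤ ∑ z ∈ supp, (1 + if E.countP (fun e => z ∈ e) = 2 then 1 else 0) :=
                Finset.sum_le_sum hptw
            _ = supp.card + D2.card := by
                rw [Finset.sum_add_distrib, Finset.sum_const, smul_eq_mul, mul_one,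
                  hD2def, Finset.card_filter]
        omega
      refine ⟨T, htrans, hsupport, ?_⟩
      have h1 : (3 * k / 2) * T.card + (3 * k / 2) * M.card
          ≤ (3 * k / 2) * Multiset.card E := by
        calc (3 * k / 2) * T.card + (3 * k / 2) * M.card
            = (3 * k / 2) * (T.card + M.card) := (Nat.mul_add _ _ _).symm
          _ ≤ (3 * k / 2) * Multiset.card E := Nat.mul_le_mul_left _ hTcard
      have h2 : (3 * k / 2) * Multiset.card E
          = k * Multiset.card E + (k / 2) * Multiset.card E := by
        have h32 : 3 * k / 2 = k + k / 2 := by omega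
        rw [h32, Nat.add_mul]
      have h3 : D2.card ≤ (3 * k / 2) * M.card := by rw [← hGcard]; exact hGM
      omega

end CMaux

/-- For `k ≥ 2`, a `k`-uniform hypergraph achieving equality in the
Chvátal–McDiarmid bound has no isolated vertex: every vertex lies in at
least one edge. -/
theorem stmt10 {V : Type*} [DecidableEq V] (k n m : ℕ) (hk : 2 ≤ k)
    (H : FinHypergraph V) (huni : H.Uniform k)
    (hn : H.verts.card = n) (hm : H.numEdges = m)
    (heq : (H.tau : ℚ) = ((n : ℚ) + ((k / 2 : ℕ) : ℚ) * (m : ℚ)) / ((3 * k / 2 : ℕ) : ℚ)) :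
    ∀ v ∈ H.verts, 0 < H.degree v := by
  classical
  intro v hv
  by_contra h0
  have hdeg0 : H.degree v = 0 := by omega
  set E : Multiset (Finset V) := (List.ofFn H.edge : Multiset (Finset V)) with hE
  have hEcard : Multiset.card E = m := by
    rw [hE, Multiset.coe_card, List.length_ofFn, hm]
  have hEmem : ∀ e : Finset V, e ∈ E ↔ ∃ i, H.edge i = e := by
    intro e
    rw [hE, Multiset.mem_coe, List.mem_ofFn]
  have hcardE : ∀ e ∈ E, Finset.card e = k := by
    intro e he
    obtain ⟨i, hi⟩ := (hEmem e).1 he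
    rw [← hi]
    exact huni i
  obtain ⟨T, hT1, hT2, hT3⟩ := CMaux.cm_main k hk (Multiset.card E) E le_rfl hcardE
  have hTsub : T ⊆ H.verts := by
    intro z hz
    obtain ⟨e, he, hze⟩ := hT2 z hz
    obtain ⟨i, hi⟩ := (hEmem e).1 he
    exact H.edge_sub i (by rw [hi]; exact hze)
  have hTtrans : H.IsTransversal T :=
    ⟨hTsub, fun i => hT1 (H.edge i) ((hEmem _).2 ⟨i, rfl⟩)⟩
  have htau : H.tau ≤ T.card := Nat.sInf_le ⟨T, hTtrans, rfl⟩
  have hsupp : (E.toFinset.sup id) ⊆ H.verts.erase v := by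
    intro z hz
    obtain ⟨e, he, hze⟩ := Finset.mem_sup.1 hz
    obtain ⟨i, hi⟩ := (hEmem e).1 (Multiset.mem_toFinset.1 he)
    refine Finset.mem_erase.2 ⟨?_, H.edge_sub i (by rw [hi]; exact hze)⟩
    intro hzv
    subst hzv
    have hpos : 0 < H.degree z :=
      Finset.card_pos.2 ⟨i, Finset.mem_filter.2 ⟨Finset.mem_univ i, by rw [hi]; exact hze⟩⟩
    omega
  have hn1 : 1 ≤ n := by
    rw [← hn]
    exact Finset.card_pos.2 ⟨v, hv⟩
  have hscard : (E.toFinset.sup id).card ≤ n - 1 := by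
    calc (E.toFinset.sup id).card ≤ (H.verts.erase v).card := Finset.card_le_card hsupp
      _ = n - 1 := by rw [Finset.card_erase_of_mem hv, hn]
  have hcpos : 0 < 3 * k / 2 := by omega
  have hnat : H.tau * (3 * k / 2) = n + (k / 2) * m := by
    have hne : ((3 * k / 2 : ℕ) : ℚ) ≠ 0 := Nat.cast_ne_zero.2 (by omega)
    rw [eq_div_iff hne] at heq
    exact_mod_cast heq
  rw [hEcard] at hT3
  have htau2 : (3 * k / 2) * H.tau ≤ (3 * k / 2) * T.card := Nat.mul_le_mul_left _ htau
  have hcomm : H.tau * (3 * k / 2) = (3 * k / 2) * H.tau := Nat.mul_comm _ _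
  omega
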